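/- Fix integers n ≥ 2 and d ≥ 3, and let f = x_1^{d-1} + x_1·x_2^{d-1} + (x_3^d + ⋯ + x_n^d) in ℂ[x_1, …, x_n] (the sum x_3^d + ⋯ + x_n^d is empty when n = 2). Let J(f) be the ideal of ℂ[x_1, …, x_n] generated by the partial derivatives ∂f/∂x_1, …, ∂f/∂x_n. Then the quotient ring ℂ[x_1, …, x_n]/J(f) is a finite-dimensional ℂ-vector space of dimension (d−1)^n − (d−1)^{n-1} + (d−1)^{n-2}. -/

import Mathlib

open MvPolynomial

namespace Stmt3Aux

open Finsupp

variable (k m : ℕ)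

noncomputable abbrev Rk := MvPolynomial (Fin (k+2)) ℂ

noncomputable def g0 : Rk k := C (m+2 : ℂ) * X 0 ^ (m+1) + X 1 ^ (m+2)
noncomputable def g1 : Rk k := C (m+2 : ℂ) * (X 0 * X 1 ^ (m+1))
noncomputable def gt (i : Fin (k+2)) : Rk k := C (m+3 : ℂ) * X i ^ (m+2)

noncomputable def G (i : Fin (k+2)) : Rk k :=
  if i = 0 then g0 k m else if i = 1 then g1 k m else gt k m i

lemma fin_two_le {i : Fin (k+2)} (h0 : i ≠ 0) (h1 : i ≠ 1) : 2 ≤ (i : ℕ) := by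
  have e0 : ((0 : Fin (k+2)) : ℕ) = 0 := rfl
  have e1 : ((1 : Fin (k+2)) : ℕ) = 1 := by simp
  rw [Fin.ne_iff_vne, e0] at h0
  rw [Fin.ne_iff_vne, e1] at h1
  omega

lemma ne_zero_of_two_le {i : Fin (k+2)} (h : 2 ≤ (i : ℕ)) : i ≠ 0 := by
  rw [Fin.ne_iff_vne, show ((0 : Fin (k+2)) : ℕ) = 0 from rfl]; omega

lemma ne_one_of_two_le {i : Fin (k+2)} (h : 2 ≤ (i : ℕ)) : i ≠ 1 := by
  rw [Fin.ne_iff_vne]; simp [Fin.val_one]; omega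

lemma mono_mul_g0 (q : Fin (k+2) →₀ ℕ) (r : ℂ) :
    monomial q r * g0 k m =
      monomial (q + single 0 (m+1)) ((m+2)*r) + monomial (q + single 1 (m+2)) r := by
  rw [g0, X_pow_eq_monomial, X_pow_eq_monomial, mul_add, C_mul_monomial, monomial_mul,
    monomial_mul]
  simp [mul_comm]

lemma mono_mul_g1 (q : Fin (k+2) →₀ ℕ) (r : ℂ) :
    monomial q r * g1 k m =
      monomial (q + single 0 1 + single 1 (m+1)) ((m+2)*r) := by
  rw [g1, X_pow_eq_monomial, ← pow_one (X 0), X_pow_eq_monomial, monomial_mul,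
    C_mul_monomial, monomial_mul, add_assoc]
  simp [mul_comm]

lemma mono_mul_gt (q : Fin (k+2) →₀ ℕ) (r : ℂ) (i : Fin (k+2)) :
    monomial q r * gt k m i = monomial (q + single i (m+2)) ((m+3)*r) := by
  rw [gt, X_pow_eq_monomial, C_mul_monomial, monomial_mul]
  simp [mul_comm]

/-- normal form of a monomial exponent -/
noncomputable def NF (e : Fin (k+2) →₀ ℕ) : Rk k :=
  if (∀ i : Fin (k+2), 2 ≤ (i:ℕ) → e i ≤ m+1) then
    if e 0 = 0 ∧ e 1 ≤ 2*m+2 then monomial e 1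
    else if 1 ≤ e 0 ∧ e 0 ≤ m ∧ e 1 ≤ m then monomial e 1
    else if e 0 = m+1 ∧ e 1 ≤ m then
      C (-(m+2:ℂ)⁻¹) * monomial ((e.update 0 0).update 1 (e 1 + m + 2)) 1
    else 0
  else 0

noncomputable def phi : Rk k →ₗ[ℂ] Rk k :=
  (basisMonomials (Fin (k+2)) ℂ).constr ℂ (NF k m)

lemma phi_monomial (e : Fin (k+2) →₀ ℕ) (r : ℂ) :
    phi k m (monomial e r) = r • NF k m e := by
  have h1 : (monomial e r : Rk k) = r • monomial e 1 := by
    rw [smul_monomial, smul_eq_mul, mul_one]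
  have h2 : (monomial e 1 : Rk k) = basisMonomials (Fin (k+2)) ℂ e := by
    rw [coe_basisMonomials]
  rw [h1, map_smul, h2, phi, Module.Basis.constr_basis]

def StdP (e : Fin (k+2) →₀ ℕ) : Prop :=
  (∀ i : Fin (k+2), 2 ≤ (i:ℕ) → e i ≤ m+1) ∧
    ((e 0 = 0 ∧ e 1 ≤ 2*m+2) ∨ (1 ≤ e 0 ∧ e 0 ≤ m ∧ e 1 ≤ m))

lemma NF_std {e : Fin (k+2) →₀ ℕ} (h : StdP k m e) : NF k m e = monomial e 1 := by
  obtain ⟨h1, h2⟩ := h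
  rw [NF, if_pos h1]
  rcases h2 with h2 | h2
  · rw [if_pos h2]
  · rw [if_neg (by omega), if_pos h2]

-- values of shifted exponents
lemma apply_add_single (e : Fin (k+2) →₀ ℕ) (i j : Fin (k+2)) (a : ℕ) :
    (e + single i a) j = e j + if i = j then a else 0 := by
  simp [Finsupp.single_apply]

lemma NF_tail_zero {e : Fin (k+2) →₀ ℕ} (i : Fin (k+2)) (hi : 2 ≤ (i:ℕ))
    (h : m + 2 ≤ e i) : NF k m e = 0 := by
  rw [NF, if_neg]
  push_neg
  exact ⟨i, hi, by omega⟩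

lemma phi_mul_gt (e : Fin (k+2) →₀ ℕ) (i : Fin (k+2)) (hi : 2 ≤ (i:ℕ)) :
    phi k m (monomial e 1 * gt k m i) = 0 := by
  rw [mono_mul_gt, phi_monomial, NF_tail_zero k m i hi, smul_zero]
  rw [apply_add_single, if_pos rfl]; omega

lemma phi_mul_g1 (e : Fin (k+2) →₀ ℕ) :
    phi k m (monomial e 1 * g1 k m) = 0 := by
  rw [mono_mul_g1, phi_monomial]
  set q := e + single 0 1 + single 1 (m+1) with hq
  have h01 : (0 : Fin (k+2)) ≠ 1 := by rw [Fin.ne_iff_vne]; simp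
  have hq0 : q 0 = e 0 + 1 := by
    rw [hq, apply_add_single, apply_add_single, if_pos rfl, if_neg (Ne.symm h01)]
  have hq1 : q 1 = e 1 + (m+1) := by
    rw [hq, apply_add_single, apply_add_single, if_pos rfl, if_neg h01]
    omega
  rw [NF]
  split_ifs with h1 h2 h3 h4 <;> try (exfalso; omega)
  all_goals simp

lemma phi_mul_g0 (e : Fin (k+2) →₀ ℕ) :
    phi k m (monomial e 1 * g0 k m) = 0 := by
  rw [mono_mul_g0, map_add, phi_monomial, phi_monomial, mul_one]
  have h01 : (0 : Fin (k+2)) ≠ 1 := by rw [Fin.ne_iff_vne]; simp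
  set q1 := e + single 0 (m+1) with hq1d
  set q2 := e + single 1 (m+2) with hq2d
  have hq10 : q1 0 = e 0 + (m+1) := by rw [hq1d, apply_add_single, if_pos rfl]
  have hq11 : q1 1 = e 1 := by rw [hq1d, apply_add_single, if_neg h01]; omega
  have hq20 : q2 0 = e 0 := by rw [hq2d, apply_add_single, if_neg (Ne.symm h01)]; omega
  have hq21 : q2 1 = e 1 + (m+2) := by rw [hq2d, apply_add_single, if_pos rfl]
  have htail1 : ∀ i : Fin (k+2), 2 ≤ (i:ℕ) → q1 i = e i := by
    intro i hi
    rw [hq1d, apply_add_single, if_neg (Ne.symm (ne_zero_of_two_le k hi))]; omega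
  have htail2 : ∀ i : Fin (k+2), 2 ≤ (i:ℕ) → q2 i = e i := by
    intro i hi
    rw [hq2d, apply_add_single, if_neg (Ne.symm (ne_one_of_two_le k hi))]; omega
  by_cases ht : ∀ i : Fin (k+2), 2 ≤ (i:ℕ) → e i ≤ m+1
  · have ht1 : ∀ i : Fin (k+2), 2 ≤ (i:ℕ) → q1 i ≤ m+1 := fun i hi => by
      rw [htail1 i hi]; exact ht i hi
    have ht2 : ∀ i : Fin (k+2), 2 ≤ (i:ℕ) → q2 i ≤ m+1 := fun i hi => by
      rw [htail2 i hi]; exact ht i hi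
    by_cases h : e 0 = 0 ∧ e 1 ≤ m
    · -- main cancellation
      rw [NF, if_pos ht1, if_neg (by omega), if_neg (by omega), if_pos (by omega)]
      rw [NF, if_pos ht2, if_pos (by omega)]
      have hexp : (q1.update 0 0).update 1 (q1 1 + m + 2) = q2 := by
        ext j
        rcases eq_or_ne j 0 with rfl | hj0
        · rw [Finsupp.coe_update]
          rw [Function.update_apply, if_neg h01, Finsupp.coe_update,
            Function.update_apply, if_pos rfl]
          omega
        · rcases eq_or_ne j 1 with rfl | hj1
          · rw [Finsupp.coe_update, Function.update_apply, if_pos rfl]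
            omega
          · rw [Finsupp.coe_update, Function.update_apply, if_neg hj1,
              Finsupp.coe_update, Function.update_apply, if_neg hj0]
            have h2j : 2 ≤ (j:ℕ) := fin_two_le k hj0 hj1
            rw [htail1 j h2j, htail2 j h2j]
      rw [hexp, one_smul, smul_eq_C_mul, ← mul_assoc, ← C_mul]
      have hm2 : ((m:ℂ)+2) ≠ 0 := by
        have : ((m:ℂ)+2) = ((m+2 : ℕ):ℂ) := by push_cast; ring
        rw [this]
        exact Nat.cast_ne_zero.mpr (by omega)
      rw [mul_neg, mul_inv_cancel₀ hm2, map_neg, C_1, neg_one_mul, neg_add_cancel]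
    · -- both normal forms vanish
      rw [NF, if_pos ht1, if_neg (by omega), if_neg (by omega), if_neg (by omega),
        NF, if_pos ht2, if_neg (by omega), if_neg (by omega), if_neg (by omega)]
      simp
  · push_neg at ht
    obtain ⟨i, hi, hei⟩ := ht
    rw [NF_tail_zero k m i hi (by rw [htail1 i hi]; omega),
      NF_tail_zero k m i hi (by rw [htail2 i hi]; omega)]
    simp


lemma phi_mul_G (e : Fin (k+2) →₀ ℕ) (i : Fin (k+2)) :
    phi k m (monomial e 1 * G k m i) = 0 := by
  rw [G]
  split_ifs with h1 h2
  · exact phi_mul_g0 k m e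
  · exact phi_mul_g1 k m e
  · exact phi_mul_gt k m e i (fin_two_le k h1 h2)

lemma phi_vanish_J (x : Rk k) (hx : x ∈ Ideal.span (Set.range (G k m))) :
    phi k m x = 0 := by
  have key : ∀ x ∈ Ideal.span (Set.range (G k m)),
      ∀ e : Fin (k+2) →₀ ℕ, phi k m (monomial e 1 * x) = 0 := by
    intro x hx
    refine Submodule.span_induction ?_ ?_ ?_ ?_ hx
    · rintro _ ⟨i, rfl⟩ e
      exact phi_mul_G k m e i
    · intro e; simp
    · intro a b _ _ ha hb e
      rw [mul_add, map_add, ha, hb, add_zero]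
    · intro r x _ hx e
      induction r using MvPolynomial.induction_on' with
      | monomial u a =>
        have : monomial e 1 * ((monomial u a : Rk k) • x) = a • (monomial (e + u) 1 * x) := by
          rw [smul_eq_mul, ← mul_assoc, monomial_mul, one_mul, smul_eq_C_mul, ← mul_assoc,
            C_mul_monomial, mul_one]
        rw [this, map_smul, hx, smul_zero]
      | add p q hp hq =>
        rw [add_smul, mul_add, map_add, hp, hq, add_zero]
  have h := key x hx 0
  rw [monomial_zero', C_1, one_mul] at h
  exact h


lemma apply_sub_single (e : Fin (k+2) →₀ ℕ) (i j : Fin (k+2)) (a : ℕ) :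
    (e - single i a) j = e j - if i = j then a else 0 := by
  rw [Finsupp.tsub_apply, Finsupp.single_apply]

lemma apply_update (e : Fin (k+2) →₀ ℕ) (i j : Fin (k+2)) (a : ℕ) :
    (e.update i a) j = if j = i then a else e j := by
  rw [Finsupp.coe_update, Function.update_apply]

lemma h01 : (0 : Fin (k+2)) ≠ 1 := by rw [Fin.ne_iff_vne]; simp

lemma g0_mem : g0 k m ∈ Ideal.span (Set.range (G k m)) := by
  have : g0 k m = G k m 0 := by rw [G, if_pos rfl]
  rw [this]; exact Ideal.subset_span ⟨0, rfl⟩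

lemma g1_mem : g1 k m ∈ Ideal.span (Set.range (G k m)) := by
  have : g1 k m = G k m 1 := by rw [G, if_neg (h01 k).symm, if_pos rfl]
  rw [this]; exact Ideal.subset_span ⟨1, rfl⟩

lemma gt_mem (i : Fin (k+2)) (hi : 2 ≤ (i:ℕ)) : gt k m i ∈ Ideal.span (Set.range (G k m)) := by
  have : gt k m i = G k m i := by
    rw [G, if_neg (ne_zero_of_two_le k hi), if_neg (ne_one_of_two_le k hi)]
  rw [this]; exact Ideal.subset_span ⟨i, rfl⟩

lemma hm2 : ((m:ℂ)+2) ≠ 0 := by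
  have : ((m:ℂ)+2) = ((m+2 : ℕ):ℂ) := by push_cast; ring
  rw [this]; exact Nat.cast_ne_zero.mpr (by omega)

lemma sub_NF_mem (e : Fin (k+2) →₀ ℕ) :
    monomial e 1 - NF k m e ∈ Ideal.span (Set.range (G k m)) := by
  by_cases ht : ∀ i : Fin (k+2), 2 ≤ (i:ℕ) → e i ≤ m+1
  swap
  · -- case S1 : some tail exponent is at least m+2
    push_neg at ht
    obtain ⟨i, hi, hei⟩ := ht
    rw [NF_tail_zero k m i hi (by omega), sub_zero]
    have hid : monomial e (1:ℂ) = monomial (e - single i (m+2)) ((m+3:ℂ)⁻¹) * gt k m i := by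
      rw [mono_mul_gt]
      have hexp : e - single i (m+2) + single i (m+2) = e := by
        ext j
        rcases eq_or_ne i j with rfl | hij
        · simp [apply_add_single, apply_sub_single]; try omega
        · simp [apply_add_single, apply_sub_single, hij]; try omega
      have hco : ((m:ℂ)+3) * ((m:ℂ)+3)⁻¹ = 1 := by
        apply mul_inv_cancel₀
        have : ((m:ℂ)+3) = ((m+3 : ℕ):ℂ) := by push_cast; ring
        rw [this]; exact Nat.cast_ne_zero.mpr (by omega)
      rw [hexp, hco]
    rw [hid]
    exact Ideal.mul_mem_left _ _ (gt_mem k m i hi)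
  · by_cases hA : e 0 = 0 ∧ e 1 ≤ 2*m+2
    · rw [NF_std k m ⟨ht, Or.inl hA⟩, sub_self]; exact zero_mem _
    by_cases hD : 1 ≤ e 0 ∧ e 0 ≤ m ∧ e 1 ≤ m
    · rw [NF_std k m ⟨ht, Or.inr hD⟩, sub_self]; exact zero_mem _
    by_cases hC : 1 ≤ e 0 ∧ m+1 ≤ e 1
    · -- divisible by x0 * x1^(m+1)
      have hNF : NF k m e = 0 := by
        rw [NF, if_pos ht, if_neg (by omega), if_neg (by omega), if_neg (by omega)]
      rw [hNF, sub_zero]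
      have hexp : e - single 0 1 - single 1 (m+1) + single 0 1 + single 1 (m+1) = e := by
        ext j
        rcases eq_or_ne j 0 with rfl | hj0
        · simp [apply_add_single, apply_sub_single, (h01 k), Ne.symm (h01 k)]; omega
        rcases eq_or_ne j 1 with rfl | hj1
        · simp [apply_add_single, apply_sub_single, (h01 k), Ne.symm (h01 k)]; omega
        · simp [apply_add_single, apply_sub_single, hj0, hj1, Ne.symm hj0, Ne.symm hj1]; try omega
      have hid : monomial e (1:ℂ) =
          monomial (e - single 0 1 - single 1 (m+1)) ((m+2:ℂ)⁻¹) * g1 k m := by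
        rw [mono_mul_g1, mul_inv_cancel₀ (hm2 m), hexp]
      rw [hid]
      exact Ideal.mul_mem_left _ _ (g1_mem k m)
    by_cases hB : e 0 = 0 ∧ 2*m+3 ≤ e 1
    · -- y^(2m+3) = y^(m+1) g0 - x^m g1
      have hNF : NF k m e = 0 := by
        rw [NF, if_pos ht, if_neg (by omega), if_neg (by omega), if_neg (by omega)]
      rw [hNF, sub_zero]
      set e' := e.update 1 (e 1 - (2*m+3)) with he'
      have hexp1 : e' + single 1 (m+1) + single 1 (m+2) = e := by
        ext j
        rcases eq_or_ne j 0 with rfl | hj0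
        · simp [he', apply_add_single, apply_update, (h01 k), Ne.symm (h01 k)]; try omega
        rcases eq_or_ne j 1 with rfl | hj1
        · simp [he', apply_add_single, apply_update]; omega
        · simp [he', apply_add_single, apply_update, hj0, hj1, Ne.symm hj0, Ne.symm hj1]; try omega
      have hexp2 : e' + single 0 m + single 0 1 + single 1 (m+1)
          = e' + single 1 (m+1) + single 0 (m+1) := by
        ext j
        rcases eq_or_ne j 0 with rfl | hj0
        · simp [apply_add_single, (h01 k), Ne.symm (h01 k)]; try omega
        rcases eq_or_ne j 1 with rfl | hj1
        · simp [apply_add_single, (h01 k), Ne.symm (h01 k)]; try omega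
        · simp [apply_add_single, hj0, hj1, Ne.symm hj0, Ne.symm hj1]; try omega
      have hid : monomial e (1:ℂ) =
          monomial (e' + single 1 (m+1)) 1 * g0 k m
            - monomial (e' + single 0 m) 1 * g1 k m := by
        rw [mono_mul_g0, mono_mul_g1, mul_one, hexp1, hexp2, add_sub_cancel_left]
      rw [hid]
      exact sub_mem (Ideal.mul_mem_left _ _ (g0_mem k m)) (Ideal.mul_mem_left _ _ (g1_mem k m))
    by_cases hE : e 0 = m+1 ∧ e 1 ≤ m
    · -- normal form is branch 3
      have hNF : NF k m e =
          C (-(m+2:ℂ)⁻¹) * monomial ((e.update 0 0).update 1 (e 1 + m + 2)) 1 := by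
        rw [NF, if_pos ht, if_neg (by omega), if_neg (by omega), if_pos hE]
      rw [hNF]
      have hexp1 : e.update 0 0 + single 0 (m+1) = e := by
        ext j
        rcases eq_or_ne j 0 with rfl | hj0
        · simp [apply_add_single, apply_update]; omega
        · simp [apply_add_single, apply_update, hj0, Ne.symm hj0]; try omega
      have hexp2 : e.update 0 0 + single 1 (m+2)
          = (e.update 0 0).update 1 (e 1 + m + 2) := by
        ext j
        rcases eq_or_ne j 0 with rfl | hj0
        · simp [apply_add_single, apply_update, (h01 k), Ne.symm (h01 k)]; try omega
        rcases eq_or_ne j 1 with rfl | hj1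
        · simp [apply_add_single, apply_update, (h01 k), Ne.symm (h01 k)]; omega
        · simp [apply_add_single, apply_update, hj0, hj1, Ne.symm hj0, Ne.symm hj1]; try omega
      have hid : monomial e (1:ℂ)
            - C (-(m+2:ℂ)⁻¹) * monomial ((e.update 0 0).update 1 (e 1 + m + 2)) 1
          = monomial (e.update 0 0) ((m+2:ℂ)⁻¹) * g0 k m := by
        rw [mono_mul_g0, mul_inv_cancel₀ (hm2 m), hexp1, hexp2, C_mul_monomial, mul_one,
          map_neg, sub_neg_eq_add]
      rw [hid]
      exact Ideal.mul_mem_left _ _ (g0_mem k m)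
    · -- remaining case : e 0 ≥ m+2 and e 1 ≤ m
      have hF : m+2 ≤ e 0 ∧ e 1 ≤ m := by omega
      have hNF : NF k m e = 0 := by
        rw [NF, if_pos ht, if_neg (by omega), if_neg (by omega), if_neg (by omega)]
      rw [hNF, sub_zero]
      have hexp1 : e - single 0 (m+1) + single 0 (m+1) = e := by
        ext j
        rcases eq_or_ne j 0 with rfl | hj0
        · simp [apply_add_single, apply_sub_single]; omega
        · simp [apply_add_single, apply_sub_single, hj0, Ne.symm hj0]; try omega
      have hexp2 : e - single 0 (m+2) + single 1 1 + single 0 1 + single 1 (m+1)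
          = e - single 0 (m+1) + single 1 (m+2) := by
        ext j
        rcases eq_or_ne j 0 with rfl | hj0
        · simp [apply_add_single, apply_sub_single, (h01 k), Ne.symm (h01 k)]; omega
        rcases eq_or_ne j 1 with rfl | hj1
        · simp [apply_add_single, apply_sub_single, (h01 k), Ne.symm (h01 k)]; try omega
        · simp [apply_add_single, apply_sub_single, hj0, hj1, Ne.symm hj0, Ne.symm hj1]; try omega
      have hid : monomial e (1:ℂ) =
          monomial (e - single 0 (m+1)) ((m+2:ℂ)⁻¹) * g0 k m
            - monomial (e - single 0 (m+2) + single 1 1) ((m+2:ℂ)⁻¹*(m+2:ℂ)⁻¹) * g1 k m := by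
        rw [mono_mul_g0, mono_mul_g1, mul_inv_cancel₀ (hm2 m), ← mul_assoc,
          mul_inv_cancel₀ (hm2 m), one_mul, hexp1, hexp2, add_sub_cancel_right]
      rw [hid]
      exact sub_mem (Ideal.mul_mem_left _ _ (g0_mem k m)) (Ideal.mul_mem_left _ _ (g1_mem k m))


noncomputable def ff : Rk k :=
  X 0 ^ (m+2) + X 0 * X 1 ^ (m+2) +
    ∑ i ∈ Finset.univ.filter (fun i : Fin (k+2) => 2 ≤ (i : ℕ)), X i ^ (m+3)

lemma natCast_C (a : ℕ) : ((a : ℂ) • (p : Rk k)) = C (a:ℂ) * p := smul_eq_C_mul p _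

lemma pderiv_X_pow' (i j : Fin (k+2)) (a : ℕ) :
    pderiv i ((X j : Rk k) ^ a) = if j = i then C (a : ℂ) * X j ^ (a-1) else 0 := by
  rw [pderiv_pow]
  rcases eq_or_ne j i with rfl | hij
  · rw [if_pos rfl, pderiv_X_self, mul_one]
    congr 1
  · rw [if_neg hij, pderiv_X_of_ne hij, mul_zero]

lemma pderiv_ff (i : Fin (k+2)) : pderiv i (ff k m) = G k m i := by
  rw [ff, map_add, map_add, map_sum]
  rcases eq_or_ne i 0 with rfl | hi0
  · rw [G, if_pos rfl, g0]
    rw [pderiv_X_pow', if_pos rfl, pderiv_mul, pderiv_X_pow', if_neg (h01 k).symm,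
      pderiv_X_self]
    rw [Finset.sum_eq_zero]
    · push_cast
      ring_nf
    · intro j hj
      rw [Finset.mem_filter] at hj
      rw [pderiv_X_pow', if_neg (ne_zero_of_two_le k hj.2)]
  rcases eq_or_ne i 1 with rfl | hi1
  · rw [G, if_neg (h01 k).symm, if_pos rfl, g1]
    rw [pderiv_X_pow', if_neg (h01 k), pderiv_mul, pderiv_X_pow', if_pos rfl,
      pderiv_X_of_ne (h01 k)]
    rw [Finset.sum_eq_zero]
    · push_cast
      ring_nf
    · intro j hj
      rw [Finset.mem_filter] at hj
      rw [pderiv_X_pow', if_neg (ne_one_of_two_le k hj.2)]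
  · have hi2 : 2 ≤ (i : ℕ) := fin_two_le k hi0 hi1
    rw [G, if_neg hi0, if_neg hi1, gt]
    rw [pderiv_X_pow', if_neg (Ne.symm hi0), pderiv_mul, pderiv_X_pow',
      if_neg (Ne.symm hi1), pderiv_X_of_ne (Ne.symm hi0)]
    rw [Finset.sum_eq_single i]
    · rw [pderiv_X_pow', if_pos rfl]
      push_cast
      ring_nf
    · intro j _ hji
      rw [pderiv_X_pow', if_neg hji]
    · intro h
      exact absurd (Finset.mem_filter.mpr ⟨Finset.mem_univ i, hi2⟩) h


noncomputable abbrev JJ : Ideal (Rk k) := Ideal.span (Set.range (G k m))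

noncomputable abbrev Qk := Rk k ⧸ JJ k m

noncomputable def pi : Rk k →ₗ[ℂ] Qk k m := (Ideal.Quotient.mkₐ ℂ (JJ k m)).toLinearMap

noncomputable def v (e : {e : Fin (k+2) →₀ ℕ // StdP k m e}) : Qk k m :=
  pi k m (monomial e.1 1)

lemma v_indep : LinearIndependent ℂ (v k m) := by
  have hw : LinearIndependent ℂ
      (fun e : {e : Fin (k+2) →₀ ℕ // StdP k m e} => (monomial e.1 1 : Rk k)) := by
    have h2 := (basisMonomials (Fin (k+2)) ℂ).linearIndependent.comp
      (Subtype.val : {e : Fin (k+2) →₀ ℕ // StdP k m e} → (Fin (k+2) →₀ ℕ))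
      Subtype.val_injective
    exact h2
  rw [linearIndependent_iff]
  intro l hl
  set w := fun e : {e : Fin (k+2) →₀ ℕ // StdP k m e} => (monomial e.1 1 : Rk k) with hwdef
  have hvw : v k m = (pi k m) ∘ w := rfl
  rw [hvw, ← Finsupp.apply_linearCombination] at hl
  have hmem : Finsupp.linearCombination ℂ w l ∈ JJ k m := by
    rwa [pi, AlgHom.toLinearMap_apply, Ideal.Quotient.mkₐ_eq_mk,
      Ideal.Quotient.eq_zero_iff_mem] at hl
  have hphi : phi k m (Finsupp.linearCombination ℂ w l) = 0 :=
    phi_vanish_J k m _ hmem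
  rw [Finsupp.apply_linearCombination] at hphi
  have hcw : (phi k m) ∘ w = w := by
    funext e
    show phi k m (monomial e.1 1) = monomial e.1 1
    rw [phi_monomial, NF_std k m e.2, one_smul]
  rw [hcw] at hphi
  exact linearIndependent_iff.mp hw l hphi

lemma NF_mk_mem (u : Fin (k+2) →₀ ℕ) :
    pi k m (NF k m u) ∈ Submodule.span ℂ (Set.range (v k m)) := by
  rw [NF]
  split_ifs with h1 h2 h3 h4
  · exact Submodule.subset_span ⟨⟨u, ⟨h1, Or.inl h2⟩⟩, rfl⟩
  · exact Submodule.subset_span ⟨⟨u, ⟨h1, Or.inr h3⟩⟩, rfl⟩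
  · set q := (u.update 0 0).update 1 (u 1 + m + 2) with hq
    have hq0 : q 0 = 0 := by
      rw [hq, apply_update, if_neg (h01 k), apply_update, if_pos rfl]
    have hq1 : q 1 = u 1 + m + 2 := by
      rw [hq, apply_update, if_pos rfl]
    have hqt : ∀ i : Fin (k+2), 2 ≤ (i:ℕ) → q i = u i := by
      intro i hi
      rw [hq, apply_update, if_neg (ne_one_of_two_le k hi), apply_update,
        if_neg (ne_zero_of_two_le k hi)]
    have hstd : StdP k m q := by
      refine ⟨fun i hi => ?_, Or.inl ⟨hq0, by omega⟩⟩
      rw [hqt i hi]; exact h1 i hi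
    have : pi k m (C (-(m+2:ℂ)⁻¹) * monomial q 1)
        = (-(m+2:ℂ)⁻¹) • pi k m (monomial q 1) := by
      rw [← smul_eq_C_mul, map_smul]
    rw [this]
    exact Submodule.smul_mem _ _ (Submodule.subset_span ⟨⟨q, hstd⟩, rfl⟩)
  · rw [map_zero]; exact zero_mem _
  · rw [map_zero]; exact zero_mem _

lemma pi_mem_span (p : Rk k) : pi k m p ∈ Submodule.span ℂ (Set.range (v k m)) := by
  induction p using MvPolynomial.induction_on' with
  | monomial u a =>
    have h1 : (monomial u a : Rk k) = a • monomial u 1 := by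
      rw [smul_monomial, smul_eq_mul, mul_one]
    have h2 : pi k m (monomial u 1) = pi k m (NF k m u) :=
      Ideal.Quotient.eq.mpr (sub_NF_mem k m u)
    rw [h1, map_smul, h2]
    exact Submodule.smul_mem _ _ (NF_mk_mem k m u)
  | add p q hp hq =>
    rw [map_add]
    exact add_mem hp hq

lemma v_span : ⊤ ≤ Submodule.span ℂ (Set.range (v k m)) := by
  intro x _
  obtain ⟨p, rfl⟩ := Ideal.Quotient.mk_surjective x
  exact pi_mem_span k m p


def S2 (m : ℕ) : Finset (ℕ × ℕ) :=
  {0} ×ˢ Finset.range (2*m+3) ∪ Finset.Icc 1 m ×ˢ Finset.range (m+1)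

lemma mem_S2 (p : ℕ × ℕ) :
    p ∈ S2 m ↔ ((p.1 = 0 ∧ p.2 ≤ 2*m+2) ∨ (1 ≤ p.1 ∧ p.1 ≤ m ∧ p.2 ≤ m)) := by
  rw [S2, Finset.mem_union, Finset.mem_product, Finset.mem_product, Finset.mem_singleton,
    Finset.mem_range, Finset.mem_Icc, Finset.mem_range]
  omega

lemma S2_card : (S2 m).card = 2*m+3 + m*(m+1) := by
  rw [S2, Finset.card_union_of_disjoint, Finset.card_product, Finset.card_product,
    Finset.card_singleton, Finset.card_range, Finset.card_range, Nat.card_Icc]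
  · rw [Nat.add_sub_cancel]; ring
  · rw [Finset.disjoint_left]
    rintro ⟨a, b⟩ h1 h2
    rw [Finset.mem_product, Finset.mem_singleton] at h1
    rw [Finset.mem_product, Finset.mem_Icc] at h2
    omega

noncomputable def stdEquiv :
    {e : Fin (k+2) →₀ ℕ // StdP k m e} ≃ ({p : ℕ × ℕ // p ∈ S2 m} × (Fin k → Fin (m+2))) where
  toFun e := (⟨(e.1 0, e.1 1), by rw [mem_S2]; exact e.2.2⟩,
    fun j => ⟨e.1 ⟨(j:ℕ)+2, by omega⟩, by
      have := e.2.1 ⟨(j:ℕ)+2, by omega⟩ (by simp)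
      omega⟩)
  invFun pt := ⟨equivFunOnFinite.symm (fun i : Fin (k+2) =>
      if h : 2 ≤ (i:ℕ) then (pt.2 ⟨(i:ℕ)-2, by omega⟩ : ℕ)
      else if (i:ℕ) = 0 then pt.1.1.1 else pt.1.1.2), by
      have hmem := (mem_S2 m pt.1.1).mp pt.1.2
      constructor
      · intro i hi
        rw [coe_equivFunOnFinite_symm, dif_pos hi]
        have := (pt.2 ⟨(i:ℕ)-2, by omega⟩).2
        omega
      · rw [coe_equivFunOnFinite_symm,
          dif_neg (by simp), dif_neg (by simp [Fin.val_one]), if_pos (by simp),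
          if_neg (by simp [Fin.val_one])]
        exact hmem⟩
  left_inv e := by
    apply Subtype.ext
    ext i
    rw [coe_equivFunOnFinite_symm]
    by_cases hi : 2 ≤ (i:ℕ)
    · rw [dif_pos hi]
      show e.1 ⟨(i:ℕ)-2+2, _⟩ = e.1 i
      congr 1
      exact Fin.ext (show (i:ℕ)-2+2 = (i:ℕ) by omega)
    · rw [dif_neg hi]
      by_cases hi0 : (i:ℕ) = 0
      · rw [if_pos hi0]
        have : i = 0 := Fin.ext (by simp [hi0])
        rw [this]
      · rw [if_neg hi0]
        have : i = 1 := Fin.ext (by simp only [Fin.val_one]; omega)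
        rw [this]
  right_inv pt := by
    refine Prod.ext ?_ ?_
    · apply Subtype.ext
      refine Prod.ext ?_ ?_ <;>
        simp only [coe_equivFunOnFinite_symm]
      · rw [dif_neg (by simp), if_pos (by simp)]
      · rw [dif_neg (by simp [Fin.val_one]), if_neg (by simp [Fin.val_one])]
    · funext j
      apply Fin.ext
      show (equivFunOnFinite.symm _ : Fin (k+2) →₀ ℕ) ⟨(j:ℕ)+2, _⟩ = ((pt.2 j : Fin (m+2)) : ℕ)
      rw [coe_equivFunOnFinite_symm, dif_pos (by simp)]
      congr 1

noncomputable instance : Fintype {e : Fin (k+2) →₀ ℕ // StdP k m e} :=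
  Fintype.ofEquiv _ (stdEquiv k m).symm

lemma card_std : Fintype.card {e : Fin (k+2) →₀ ℕ // StdP k m e}
    = (2*m+3 + m*(m+1)) * (m+2)^k := by
  rw [Fintype.card_congr (stdEquiv k m), Fintype.card_prod, Fintype.card_coe, S2_card,
    Fintype.card_fun, Fintype.card_fin, Fintype.card_fin]

noncomputable def bas : Module.Basis {e : Fin (k+2) →₀ ℕ // StdP k m e} ℂ (Qk k m) :=
  Module.Basis.mk (v_indep k m) (v_span k m)

lemma final1 : FiniteDimensional ℂ (Qk k m) :=
  Module.Finite.of_basis (bas k m)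

lemma final2 : Module.finrank ℂ (Qk k m) = (2*m+3 + m*(m+1)) * (m+2)^k := by
  rw [Module.finrank_eq_card_basis (bas k m), card_std]

end Stmt3Aux

open Stmt3Aux in
/-- The Milnor algebra of `f = x₁^{d-1} + x₁ x₂^{d-1} + (x₃^d + ⋯ + xₙ^d)` is a
finite-dimensional complex vector space of dimension
`(d-1)^n - (d-1)^{n-1} + (d-1)^{n-2}`. -/
theorem stmt_3 (n d : ℕ) (hn : 2 ≤ n) (hd : 3 ≤ d)
    (f : MvPolynomial (Fin n) ℂ)
    (hf : f = X (⟨0, by omega⟩ : Fin n) ^ (d - 1) +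
        X (⟨0, by omega⟩ : Fin n) * X (⟨1, by omega⟩ : Fin n) ^ (d - 1) +
        ∑ i ∈ Finset.univ.filter (fun i : Fin n => 2 ≤ (i : ℕ)), X i ^ d)
    (J : Ideal (MvPolynomial (Fin n) ℂ))
    (hJ : J = Ideal.span (Set.range fun i : Fin n => pderiv i f)) :
    FiniteDimensional ℂ (MvPolynomial (Fin n) ℂ ⧸ J) ∧
      Module.finrank ℂ (MvPolynomial (Fin n) ℂ ⧸ J) =
        (d - 1) ^ n - (d - 1) ^ (n - 1) + (d - 1) ^ (n - 2) := by
  obtain ⟨k, rfl⟩ : ∃ k, n = k + 2 := ⟨n - 2, by omega⟩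
  obtain ⟨m, rfl⟩ : ∃ m, d = m + 3 := ⟨d - 3, by omega⟩
  have h1 : m + 3 - 1 = m + 2 := by omega
  have e0 : (⟨0, by omega⟩ : Fin (k+2)) = 0 := by apply Fin.ext; simp
  have e1 : (⟨1, by omega⟩ : Fin (k+2)) = 1 := by apply Fin.ext; simp [Fin.val_one]
  have hff : f = ff k m := by
    rw [hf, h1, e0, e1, ff]
  have hG : (fun i : Fin (k+2) => pderiv i f) = G k m :=
    funext fun i => by rw [hff, pderiv_ff]
  have hJJ : J = JJ k m := by rw [hJ, hG]
  rw [hJJ]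
  refine ⟨final1 k m, ?_⟩
  rw [final2 k m, h1, show (k+2)-1 = k+1 by omega, show (k+2)-2 = k by omega]
  simp only [pow_succ]
  have hle : (m+2)^k * (m+2) ≤ (m+2)^k * (m+2) * (m+2) :=
    Nat.le_mul_of_pos_right _ (by omega)
  zify [hle]
  ring
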